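/- Let k ≥ 2, let λ_1, …, λ_k ∈ ℂ with Re λ_1 < Re λ_2 < … < Re λ_k, let a_1, …, a_k be nonzero complex numbers, and set y(z) = Σ_{j=1}^k a_j e^{λ_j z}. Then the set ℝ \ G(y,0) (real numbers u at which no single term dominates) is contained in a union of at most k−1 closed intervals whose lengths sum to at most 2(k−1)·(ln 4)·Θ. -/

import Mathlib

/-- Upper growth bound for a sum of exponentials whose rates are all `≤ ρ`. -/
lemma sum_exp_upper {s : Finset ℕ} {b r : ℕ → ℝ} (hb : ∀ i ∈ s, 0 ≤ b i) {ρ u v : ℝ}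
    (hr : ∀ i ∈ s, r i ≤ ρ) (huv : u ≤ v) :
    ∑ i ∈ s, b i * Real.exp (r i * v) ≤
      Real.exp (ρ * (v - u)) * ∑ i ∈ s, b i * Real.exp (r i * u) := by
  rw [Finset.mul_sum]
  refine Finset.sum_le_sum fun i hi => ?_
  have h1 : b i * Real.exp (r i * v) =
      b i * Real.exp (r i * u) * Real.exp (r i * (v - u)) := by
    rw [mul_assoc, ← Real.exp_add]; ring_nf
  rw [h1]
  have h2 : Real.exp (r i * (v - u)) ≤ Real.exp (ρ * (v - u)) :=
    Real.exp_le_exp.mpr (mul_le_mul_of_nonneg_right (hr i hi) (by linarith))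
  calc b i * Real.exp (r i * u) * Real.exp (r i * (v - u))
      ≤ b i * Real.exp (r i * u) * Real.exp (ρ * (v - u)) :=
        mul_le_mul_of_nonneg_left h2 (mul_nonneg (hb i hi) (Real.exp_nonneg _))
    _ = Real.exp (ρ * (v - u)) * (b i * Real.exp (r i * u)) := by ring

/-- Lower growth bound for a sum of exponentials whose rates are all `≥ ρ`. -/
lemma sum_exp_lower {s : Finset ℕ} {b r : ℕ → ℝ} (hb : ∀ i ∈ s, 0 ≤ b i) {ρ u v : ℝ}
    (hr : ∀ i ∈ s, ρ ≤ r i) (huv : u ≤ v) :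
    Real.exp (ρ * (v - u)) * ∑ i ∈ s, b i * Real.exp (r i * u) ≤
      ∑ i ∈ s, b i * Real.exp (r i * v) := by
  rw [Finset.mul_sum]
  refine Finset.sum_le_sum fun i hi => ?_
  have h1 : b i * Real.exp (r i * v) =
      b i * Real.exp (r i * u) * Real.exp (r i * (v - u)) := by
    rw [mul_assoc, ← Real.exp_add]; ring_nf
  rw [h1]
  have h2 : Real.exp (ρ * (v - u)) ≤ Real.exp (r i * (v - u)) :=
    Real.exp_le_exp.mpr (mul_le_mul_of_nonneg_right (hr i hi) (by linarith))
  calc Real.exp (ρ * (v - u)) * (b i * Real.exp (r i * u))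
      ≤ Real.exp (r i * (v - u)) * (b i * Real.exp (r i * u)) :=
        mul_le_mul_of_nonneg_right h2 (mul_nonneg (hb i hi) (Real.exp_nonneg _))
    _ = b i * Real.exp (r i * u) * Real.exp (r i * (v - u)) := by ring

/-- For `y(z) = Σ_{j<k} a_j e^{λ_j z}` with simple exponents of increasing
real parts and nonzero coefficients, the set of real `u` at which no single term dominates is
contained in a union of at most `k−1` closed intervals of total length at most
`2(k−1)(ln 4)Θ`. -/
theorem stmt_5 (k : ℕ) (hk : 2 ≤ k) (l : ℕ → ℂ)
    (hmono : ∀ j, j + 1 < k → (l j).re < (l (j + 1)).re)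
    (a : ℕ → ℂ) (ha : ∀ j < k, a j ≠ 0)
    (Θ : ℝ)
    (hΘ : Θ = (Finset.range (k - 1)).sup' (Finset.nonempty_range_iff.mpr (by omega))
      fun j => ((l (j + 1)).re - (l j).re)⁻¹) :
    ∃ (N : ℕ) (c w : ℕ → ℝ), N ≤ k - 1 ∧ (∀ i, 0 ≤ w i) ∧
      (∑ i ∈ Finset.range N, w i) ≤ 2 * ((k : ℝ) - 1) * Real.log 4 * Θ ∧
      ∀ u : ℝ,
        (¬ ∃ j < k, ∃ ε : ℝ, 0 < ε ∧
          (1 + ε) * ∑ i ∈ (Finset.range k).erase j,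
              ‖a i * Complex.exp (l i * (u : ℂ))‖
            ≤ ‖a j * Complex.exp (l j * (u : ℂ))‖) →
        ∃ i < N, u ∈ Set.Icc (c i) (c i + w i) := by
  classical
  -- basic data
  set m : ℕ → ℝ → ℝ := fun i u => ‖a i‖ * Real.exp ((l i).re * u) with hm
  have habs : ∀ i (u : ℝ),
      ‖a i * Complex.exp (l i * (u : ℂ))‖ = m i u := by
    intro i u
    rw [norm_mul, Complex.norm_exp]
    simp [hm, Complex.mul_re]
  have hm_pos : ∀ i, i < k → ∀ u : ℝ, 0 < m i u := by
    intro i hi u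
    exact mul_pos (norm_pos_iff.mpr (ha i hi)) (Real.exp_pos _)
  set F : ℕ → ℝ → ℝ := fun j u => ∑ i ∈ Finset.range j, m i u with hF
  set G : ℕ → ℝ → ℝ := fun j u => ∑ i ∈ Finset.Ico j k, m i u with hG
  have hmono' : ∀ i j, i ≤ j → j < k → (l i).re ≤ (l j).re := by
    intro i j hij hjk
    induction j with
    | zero =>
      have : i = 0 := Nat.le_zero.mp hij
      simp [this]
    | succ n ih =>
      rcases Nat.lt_or_ge i (n + 1) with h | h
      · have h1 : (l i).re ≤ (l n).re := ih (by omega) (by omega)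
        exact le_trans h1 (le_of_lt (hmono n hjk))
      · have : i = n + 1 := by omega
        simp [this]
  have hFpos : ∀ j u, 1 ≤ j → j ≤ k → 0 < F j u := by
    intro j u h1 h2
    apply Finset.sum_pos
    · intro i hi
      have hik : i < k := by have := Finset.mem_range.mp hi; omega
      exact hm_pos i hik u
    · exact Finset.nonempty_range_iff.mpr (by omega)
  have hGpos : ∀ j u, j < k → 0 < G j u := by
    intro j u h1
    apply Finset.sum_pos
    · intro i hi
      have hik : i < k := by have := Finset.mem_Ico.mp hi; omega
      exact hm_pos i hik u
    · exact ⟨j, Finset.mem_Ico.mpr ⟨le_refl _, h1⟩⟩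
  have hΘge : ∀ t, t + 1 < k → ((l (t + 1)).re - (l t).re)⁻¹ ≤ Θ := by
    intro t ht
    rw [hΘ]
    exact Finset.le_sup' (fun j => ((l (j + 1)).re - (l j).re)⁻¹)
      (Finset.mem_range.mpr (show t < k - 1 by omega))
  have hΘpos : 0 < Θ := by
    have h0 : (0:ℕ) + 1 < k := by omega
    have := hΘge 0 h0
    have hδ : 0 < (l (0 + 1)).re - (l 0).re := sub_pos.mpr (hmono 0 h0)
    have := inv_pos.mpr hδ
    linarith [hΘge 0 h0]
  set D : ℝ := Real.log 9 * Θ with hD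
  have hlog9 : 0 ≤ Real.log 9 := Real.log_nonneg (by norm_num)
  have hDnn : 0 ≤ D := mul_nonneg hlog9 (le_of_lt hΘpos)
  -- the "bad" sets
  set B : ℕ → Set ℝ := fun t =>
    {u : ℝ | F (t + 1) u ≤ 3 * G (t + 1) u ∧ G (t + 1) u ≤ 3 * F (t + 1) u} with hB
  -- two points in a bad set are within D of each other
  have hpair : ∀ t, t + 1 < k → ∀ x y : ℝ, x ≤ y → x ∈ B t → y ∈ B t → y - x ≤ D := by
    intro t ht x y hxy hx hy
    set α := (l t).re
    set β := (l (t + 1)).re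
    have hδ : 0 < β - α := sub_pos.mpr (hmono t ht)
    have hFle : F (t + 1) y ≤ Real.exp (α * (y - x)) * F (t + 1) x := by
      refine sum_exp_upper (fun i _ => norm_nonneg _) (fun i hi => ?_) hxy
      exact hmono' i t (by have := Finset.mem_range.mp hi; omega) (by omega)
    have hGge : Real.exp (β * (y - x)) * G (t + 1) x ≤ G (t + 1) y := by
      refine sum_exp_lower (fun i _ => norm_nonneg _) (fun i hi => ?_) hxy
      have hi' := Finset.mem_Ico.mp hi
      exact hmono' (t + 1) i hi'.1 hi'.2
    have hGx : 0 < G (t + 1) x := hGpos (t + 1) x ht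
    have hFx : 0 < F (t + 1) x := hFpos (t + 1) x (by omega) (by omega)
    -- chain of inequalities
    have h1 : Real.exp (β * (y - x)) * G (t + 1) x ≤
        9 * Real.exp (α * (y - x)) * G (t + 1) x := by
      calc Real.exp (β * (y - x)) * G (t + 1) x ≤ G (t + 1) y := hGge
        _ ≤ 3 * F (t + 1) y := hy.2
        _ ≤ 3 * (Real.exp (α * (y - x)) * F (t + 1) x) := by linarith
        _ ≤ 3 * (Real.exp (α * (y - x)) * (3 * G (t + 1) x)) := by
            have := hx.1
            have hep : 0 < Real.exp (α * (y - x)) := Real.exp_pos _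
            nlinarith
        _ = 9 * Real.exp (α * (y - x)) * G (t + 1) x := by ring
    have h2 : Real.exp (β * (y - x)) ≤ 9 * Real.exp (α * (y - x)) :=
      le_of_mul_le_mul_right (by linarith [h1]) hGx
    have h3 : Real.exp ((β - α) * (y - x)) ≤ 9 := by
      have hep : 0 < Real.exp (α * (y - x)) := Real.exp_pos _
      have heq : Real.exp (β * (y - x)) =
          Real.exp ((β - α) * (y - x)) * Real.exp (α * (y - x)) := by
        rw [← Real.exp_add]; ring_nf
      rw [heq] at h2
      exact le_of_mul_le_mul_right h2 hep
    have h4 : (β - α) * (y - x) ≤ Real.log 9 :=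
      (Real.le_log_iff_exp_le (by norm_num)).mpr h3
    have h5 : y - x ≤ Real.log 9 * (β - α)⁻¹ := by
      rw [mul_comm] at h4 ⊢
      rw [inv_mul_eq_div, le_div_iff₀ hδ]
      linarith
    calc y - x ≤ Real.log 9 * (β - α)⁻¹ := h5
      _ ≤ Real.log 9 * Θ := mul_le_mul_of_nonneg_left (hΘge t ht) hlog9
  -- the intervals
  refine ⟨k - 1, fun t => sInf (B t), fun _ => D, le_refl _, fun _ => hDnn, ?_, ?_⟩
  · -- total length
    rw [Finset.sum_const, Finset.card_range, nsmul_eq_mul]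
    have hcast : ((k - 1 : ℕ) : ℝ) = (k : ℝ) - 1 := by
      have : (1:ℕ) ≤ k := by omega
      push_cast [this]; ring
    rw [hcast, hD]
    have hlog : Real.log 9 ≤ 2 * Real.log 4 := by
      have h16 : (2:ℝ) * Real.log 4 = Real.log 16 := by
        rw [show (16:ℝ) = 4 ^ 2 by norm_num, Real.log_pow]; norm_num
      rw [h16]
      exact Real.log_le_log (by norm_num) (by norm_num)
    have hknn : (0:ℝ) ≤ (k : ℝ) - 1 := by
      have : (2:ℝ) ≤ (k : ℝ) := by exact_mod_cast hk
      linarith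
    have hmul : ((k:ℝ) - 1) * Θ * Real.log 9 ≤ ((k:ℝ) - 1) * Θ * (2 * Real.log 4) :=
      mul_le_mul_of_nonneg_left hlog (mul_nonneg hknn hΘpos.le)
    nlinarith [hmul]
  · -- covering
    intro u hno
    by_cases hball : ∃ t, t < k - 1 ∧ u ∈ B t
    · obtain ⟨t, ht, hu⟩ := hball
      refine ⟨t, ht, ?_⟩
      have hlb : ∀ y ∈ B t, u - D ≤ y := by
        intro y hy
        rcases le_total y u with h | h
        · have := hpair t (by omega) y u h hy hu
          linarith
        · linarith
      have hbdd : BddBelow (B t) := ⟨u - D, hlb⟩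
      constructor
      · exact csInf_le hbdd hu
      · have : u - D ≤ sInf (B t) := le_csInf ⟨u, hu⟩ hlb
        linarith
    · -- no bad set contains u: some term dominates, contradiction
      exfalso
      apply hno
      push_neg at hball
      -- sum over the erased range
      have herase : ∀ p, p < k →
          (∑ i ∈ (Finset.range k).erase p,
            ‖a i * Complex.exp (l i * (u : ℂ))‖) = F p u + G (p + 1) u := by
        intro p hp
        have h1 : (∑ i ∈ (Finset.range k).erase p,
            ‖a i * Complex.exp (l i * (u : ℂ))‖) =
            ∑ i ∈ (Finset.range k).erase p, m i u :=
          Finset.sum_congr rfl fun i _ => habs i u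
        rw [h1, Finset.sum_erase_eq_sub (Finset.mem_range.mpr hp)]
        have h2 : ∑ i ∈ Finset.range k, m i u = F p u + (m p u + G (p + 1) u) := by
          rw [Finset.range_eq_Ico,
            ← Finset.sum_Ico_consecutive (fun i => m i u) (Nat.zero_le (p + 1)) (by omega)]
          have h3 : ∑ i ∈ Finset.Ico 0 (p + 1), m i u = F p u + m p u := by
            rw [← Finset.range_eq_Ico, Finset.sum_range_succ]
          rw [h3]
          simp only [hG]
          ring
        rw [h2]; ring
      by_cases hQ : ∃ t, t < k - 1 ∧ G (t + 1) u ≤ 3 * F (t + 1) u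
      · -- least such t
        have hpk := (Nat.find_spec hQ).1
        have hpG := (Nat.find_spec hQ).2
        set p := Nat.find hQ with hpdef
        have hnotB := hball p hpk
        have hFp : 3 * G (p + 1) u < F (p + 1) u := by
          by_contra hcon
          push_neg at hcon
          exact hnotB ⟨by linarith, hpG⟩
        by_cases hp0 : p = 0
        · rw [hp0] at hFp
          refine ⟨0, by omega, 2, by norm_num, ?_⟩
          rw [herase 0 (by omega), habs]
          have hF1 : F 1 u = m 0 u := by simp [hF]
          have hF0 : F 0 u = 0 := by simp [hF]
          rw [hF1] at hFp
          rw [hF0]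
          linarith
        · obtain ⟨q, hq⟩ := Nat.exists_eq_succ_of_ne_zero hp0
          have hmin : ¬(q < k - 1 ∧ G (q + 1) u ≤ 3 * F (q + 1) u) :=
            Nat.find_min hQ (by omega)
          rw [hq] at hFp hpG hpk
          have hGq : 3 * F (q + 1) u < G (q + 1) u := by
            by_contra hcon
            push_neg at hcon
            exact hmin ⟨by omega, hcon⟩
          have hGsplit : G (q + 1) u = m (q + 1) u + G (q + 1 + 1) u := by
            simp only [hG]
            exact Finset.sum_eq_sum_Ico_succ_bot (by omega) _
          have hFsplit : F (q + 1 + 1) u = F (q + 1) u + m (q + 1) u := by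
            simp only [hF]
            exact Finset.sum_range_succ _ _
          rw [hGsplit] at hGq
          rw [hFsplit] at hFp
          have hCA : G (q + 1 + 1) u ≤ 3 * (F (q + 1) u + m (q + 1) u) := by
            rw [hFsplit] at hpG; exact hpG
          have hApos : 0 < F (q + 1) u := hFpos (q + 1) u (by omega) (by omega)
          have hCpos : 0 < G (q + 1 + 1) u := hGpos (q + 1 + 1) u (by omega)
          have hkey : F (q + 1) u + G (q + 1 + 1) u < m (q + 1) u := by nlinarith
          have hACpos : 0 < F (q + 1) u + G (q + 1 + 1) u := by linarith
          refine ⟨q + 1, by omega,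
            m (q + 1) u / (F (q + 1) u + G (q + 1 + 1) u) - 1, ?_, ?_⟩
          · rw [sub_pos]
            exact (one_lt_div hACpos).mpr hkey
          · rw [herase (q + 1) (by omega), habs]
            have heq : (1 + (m (q + 1) u / (F (q + 1) u + G (q + 1 + 1) u) - 1)) *
                (F (q + 1) u + G (q + 1 + 1) u) = m (q + 1) u := by
              field_simp
              ring
            rw [heq]
      · -- all splits have a huge tail: the top term dominates
        push_neg at hQ
        have h := hQ (k - 2) (by omega)
        have hidx : k - 2 + 1 = k - 1 := by omega
        rw [hidx] at h
        refine ⟨k - 1, by omega, 2, by norm_num, ?_⟩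
        rw [herase (k - 1) (by omega), habs]
        have hk1 : k - 1 + 1 = k := by omega
        have hGk : G (k - 1 + 1) u = 0 := by
          simp only [hG, hk1, Finset.Ico_self, Finset.sum_empty]
        have hGval : G (k - 1) u = m (k - 1) u := by
          simp only [hG]
          rw [Finset.sum_eq_sum_Ico_succ_bot (by omega : k - 1 < k), hk1,
            Finset.Ico_self, Finset.sum_empty, add_zero]
        rw [hGval] at h
        rw [hGk]
        linarith
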